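/- arXiv:2207.05646 — 2 statements merged into one kernel-verified Lean document; each statement's English description precedes it below -/
import Mathlib

section
/- ReMAD channels are phase covariant: for every θ ∈ ℝ, Φ_Γ(U(θ) ρ U(θ)†) = U(θ) Φ_Γ(ρ) U(θ)†, where U(θ) = Σ_{j=0}^{d-1} e^{-ijθ} |j⟩⟨j|. -/
open scoped BigOperators
open Matrix

/-- ReMAD Kraus operator `K^{(i)} = Σ_{l=0}^{d-i-1} √(γ_{i+l,l}) |l⟩⟨i+l|`. -/
noncomputable def remadKraus (d : ℕ) (γ : ℕ → ℕ → ℝ) (i : Fin d) :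
    Matrix (Fin d) (Fin d) ℂ :=
  Matrix.of fun a b => if (b : ℕ) = (i : ℕ) + (a : ℕ) then ((Real.sqrt (γ b a) : ℝ) : ℂ) else 0

/-- The ReMAD channel `Φ_Γ(ρ) = Σ_i K^{(i)} ρ K^{(i)†}`. -/
noncomputable def remadChannel (d : ℕ) (γ : ℕ → ℕ → ℝ) (ρ : Matrix (Fin d) (Fin d) ℂ) :
    Matrix (Fin d) (Fin d) ℂ :=
  ∑ i : Fin d, remadKraus d γ i * ρ * (remadKraus d γ i)ᴴ

/-- The diagonal phase unitary `U(θ) = Σ_j e^{-ijθ} |j⟩⟨j|`. -/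
noncomputable def phaseU (d : ℕ) (θ : ℝ) : Matrix (Fin d) (Fin d) ℂ :=
  Matrix.diagonal fun j : Fin d => Complex.exp (-Complex.I * (j : ℕ) * (θ : ℂ))

/-- ReMAD channels are phase covariant:
`Φ_Γ(U(θ) ρ U(θ)†) = U(θ) Φ_Γ(ρ) U(θ)†` for every `θ ∈ ℝ`. -/
theorem remad_phase_covariant (d : ℕ) (hd : 1 ≤ d) (γ : ℕ → ℕ → ℝ)
    (hnn : ∀ j k : ℕ, k ≤ j → j < d → 0 ≤ γ j k)
    (hsum : ∀ j : ℕ, j < d → ∑ k ∈ Finset.range (j + 1), γ j k = 1)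
    (θ : ℝ) (ρ : Matrix (Fin d) (Fin d) ℂ) :
    remadChannel d γ (phaseU d θ * ρ * (phaseU d θ)ᴴ) =
      phaseU d θ * remadChannel d γ ρ * (phaseU d θ)ᴴ := by
  have key : ∀ i : Fin d, remadKraus d γ i * phaseU d θ =
      Complex.exp (-Complex.I * (i : ℕ) * (θ : ℂ)) • (phaseU d θ * remadKraus d γ i) := by
    intro i
    ext a b
    simp only [phaseU, remadKraus, Matrix.mul_diagonal, Matrix.diagonal_mul,
      Matrix.smul_apply, Matrix.of_apply, smul_eq_mul]
    by_cases h : (b : ℕ) = (i : ℕ) + (a : ℕ)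
    · simp only [h, if_pos rfl, if_true]
      rw [show Complex.exp (-Complex.I * ((((i : ℕ) + (a : ℕ)) : ℕ) : ℂ) * (θ : ℂ)) =
          Complex.exp (-Complex.I * ((i : ℕ) : ℂ) * θ) *
            Complex.exp (-Complex.I * ((a : ℕ) : ℂ) * θ) by
        rw [← Complex.exp_add]; push_cast; ring_nf]
      ring
    · simp [h]
  unfold remadChannel
  rw [Finset.mul_sum, Finset.sum_mul]
  refine Finset.sum_congr rfl fun i _ => ?_
  have h1 : remadKraus d γ i * (phaseU d θ * ρ * (phaseU d θ)ᴴ) * (remadKraus d γ i)ᴴ =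
      (remadKraus d γ i * phaseU d θ) * ρ * (remadKraus d γ i * phaseU d θ)ᴴ := by
    rw [Matrix.conjTranspose_mul]; simp only [Matrix.mul_assoc]
  rw [h1, key i]
  set c := Complex.exp (-Complex.I * (i : ℕ) * (θ : ℂ)) with hc
  have hcc : (starRingEnd ℂ) c * c = 1 := by
    rw [hc, ← Complex.exp_conj, ← Complex.exp_add]
    rw [show (starRingEnd ℂ) (-Complex.I * (i : ℕ) * (θ : ℂ)) = Complex.I * (i : ℕ) * (θ : ℂ) by
      simp [_root_.map_mul]]
    ring_nf
    exact Complex.exp_zero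
  rw [Matrix.conjTranspose_smul, Matrix.conjTranspose_mul]
  simp only [Matrix.smul_mul, Matrix.mul_smul, smul_smul]
  rw [show (star c : ℂ) = (starRingEnd ℂ) c from rfl, hcc, one_smul]
  simp only [Matrix.mul_assoc]
end

section
/- Each Kraus operator of a ReMAD channel shifts phases: K^{(i)} U(θ) = e^{-iiθ} U(θ) K^{(i)} for every i ∈ {0,…,d-1} and θ ∈ ℝ, where U(θ) = Σ_j e^{-ijθ}|j⟩⟨j| (here the scalar exponent is i·θ times the Kraus index i). -/
open scoped BigOperators
open Matrix

/-- Each ReMAD Kraus operator shifts phases: `K^{(i)} U(θ) = e^{-i·iθ} U(θ) K^{(i)}`,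
where the scalar exponent is the Kraus index `i` times `θ`. -/
theorem remad_kraus_phase_shift (d : ℕ) (hd : 1 ≤ d) (γ : ℕ → ℕ → ℝ)
    (hnn : ∀ j k : ℕ, k ≤ j → j < d → 0 ≤ γ j k)
    (hsum : ∀ j : ℕ, j < d → ∑ k ∈ Finset.range (j + 1), γ j k = 1)
    (i : Fin d) (θ : ℝ) :
    remadKraus d γ i * phaseU d θ =
      Complex.exp (-Complex.I * (i : ℕ) * (θ : ℂ)) • (phaseU d θ * remadKraus d γ i) := by
  ext a b
  simp only [remadKraus, phaseU, Matrix.mul_diagonal, Matrix.smul_apply,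
    Matrix.diagonal_mul, Matrix.of_apply, smul_eq_mul]
  by_cases h : (b : ℕ) = (i : ℕ) + (a : ℕ)
  · simp only [h, if_pos rfl, if_true]
    rw [← mul_assoc, ← Complex.exp_add, mul_comm]
    congr 1
    push_cast
    ring
  · simp [h]
end
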